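/- Let λ, μ be real numbers with λ ≥ 1 and λ + μ > 1, and let n be a natural number. Then for every z in the open unit disc 𝕌 the partial sum (𝕎_{λ,μ})_n(z) is nonzero for z ≠ 0 and Re(𝕎_{λ,μ}(z)/(𝕎_{λ,μ})_n(z)) ≥ (2(λ+μ)−2)/(2(λ+μ)−1), where at z = 0 the ratio is understood as its analytic extension with value 1. -/

import Mathlib

/-- The second normalized Wright function
`𝕎_{λ,μ}(z) = z + ∑_{m=1}^∞ (Γ(λ+μ)/((m+1)! Γ(λm+λ+μ))) z^{m+1}`. -/
noncomputable def normWright2 (lam mu : ℝ) (z : ℂ) : ℂ :=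
  ∑' m : ℕ,
    ((Real.Gamma (lam + mu) / (Nat.factorial (m + 1) * Real.Gamma (lam * m + lam + mu)) : ℝ) : ℂ)
      * z ^ (m + 1)

/-- The `n`-th partial sum
`(𝕎_{λ,μ})_n(z) = z + ∑_{m=1}^n (Γ(λ+μ)/((m+1)! Γ(λm+λ+μ))) z^{m+1}`. -/
noncomputable def normWright2Partial (lam mu : ℝ) (n : ℕ) (z : ℂ) : ℂ :=
  ∑ m ∈ Finset.range (n + 1),
    ((Real.Gamma (lam + mu) / (Nat.factorial (m + 1) * Real.Gamma (lam * m + lam + mu)) : ℝ) : ℂ)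
      * z ^ (m + 1)


section WrightAux


noncomputable def wcoef (lam mu : ℝ) (m : ℕ) : ℝ :=
  Real.Gamma (lam + mu) / (Nat.factorial (m + 1) * Real.Gamma (lam * m + lam + mu))

lemma wcoef_pos {lam mu : ℝ} (hlam : 1 ≤ lam) (hmu : 1 < lam + mu) (m : ℕ) :
    0 < wcoef lam mu m := by
  have h1 : (0:ℝ) < lam + mu := by linarith
  have h2 : (0:ℝ) < lam * m + lam + mu := by
    have : (0:ℝ) ≤ lam * m := by positivity
    linarith
  exact div_pos (Real.Gamma_pos_of_pos h1)
    (mul_pos (by exact_mod_cast Nat.factorial_pos _) (Real.Gamma_pos_of_pos h2))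

lemma wcoef_zero {lam mu : ℝ} (hmu : 1 < lam + mu) : wcoef lam mu 0 = 1 := by
  have h1 : (0:ℝ) < lam + mu := by linarith
  simp [wcoef, Nat.factorial, (Real.Gamma_pos_of_pos h1).ne']

/-- Pochhammer lower bound for Gamma. -/
lemma gamma_lb {s : ℝ} (hs : 1 < s) (m : ℕ) :
    s * (s+1)^m * Real.Gamma s ≤ Real.Gamma ((m+1 : ℕ) + s) := by
  induction m with
  | zero =>
    have : ((0+1:ℕ):ℝ) + s = s + 1 := by push_cast; ring
    rw [this, Real.Gamma_add_one (by linarith)]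
    simp
  | succ k ih =>
    have harg : ((k+1+1:ℕ):ℝ) + s = (((k+1:ℕ):ℝ) + s) + 1 := by push_cast; ring
    have hne : ((k+1:ℕ):ℝ) + s ≠ 0 := by positivity
    rw [harg, Real.Gamma_add_one hne]
    have hpos : 0 < Real.Gamma (((k+1:ℕ):ℝ) + s) :=
      Real.Gamma_pos_of_pos (by positivity)
    have h1 : s + 1 ≤ ((k+1:ℕ):ℝ) + s := by push_cast; linarith [Nat.cast_nonneg (α := ℝ) k]
    calc s * (s+1)^(k+1) * Real.Gamma s = (s+1) * (s * (s+1)^k * Real.Gamma s) := by ring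
    _ ≤ (s+1) * Real.Gamma (((k+1:ℕ):ℝ) + s) := by
        apply mul_le_mul_of_nonneg_left ih (by linarith)
    _ ≤ (((k+1:ℕ):ℝ) + s) * Real.Gamma (((k+1:ℕ):ℝ) + s) :=
        mul_le_mul_of_nonneg_right h1 hpos.le

/-- Main coefficient bound: for `m = k+1 ≥ 1`,
`wcoef lam mu (k+1) ≤ 1 / ((k+2)! * (s * (s+1)^k))` where `s = lam+mu`. -/
lemma wcoef_le {lam mu : ℝ} (hlam : 1 ≤ lam) (hmu : 1 < lam + mu) (k : ℕ) :
    wcoef lam mu (k+1) ≤ 1 / (Nat.factorial (k+2) * ((lam+mu) * (lam+mu+1)^k)) := by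
  set s := lam + mu with hs
  have hs1 : 1 < s := hmu
  have hGs : 0 < Real.Gamma s := Real.Gamma_pos_of_pos (by linarith)
  -- Gamma monotonicity: Γ((k+1)+s) ≤ Γ(lam*(k+1)+lam+mu)
  have harg : lam * (k+1 : ℕ) + lam + mu = lam * ((k+1:ℕ)+1) + mu := by push_cast; ring
  have hle : ((k+1:ℕ):ℝ) + s ≤ lam * (k+1:ℕ) + lam + mu := by
    have : ((k+1:ℕ):ℝ) ≤ lam * (k+1:ℕ) := by
      nlinarith [Nat.cast_nonneg (α := ℝ) (k+1), (by exact_mod_cast Nat.succ_le_succ (Nat.zero_le k) : (1:ℝ) ≤ ((k+1:ℕ):ℝ))]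
    simp only [hs]; linarith
  have hmem1 : ((k+1:ℕ):ℝ) + s ∈ Set.Ici (2:ℝ) := by
    simp only [Set.mem_Ici]
    have : (1:ℝ) ≤ ((k+1:ℕ):ℝ) := by exact_mod_cast Nat.succ_le_succ (Nat.zero_le k)
    linarith
  have hmono : Real.Gamma (((k+1:ℕ):ℝ) + s) ≤ Real.Gamma (lam * (k+1:ℕ) + lam + mu) :=
    Real.Gamma_strictMonoOn_Ici.monotoneOn hmem1 (Set.mem_Ici.2 (le_trans hmem1 hle)) hle
  have hgl := gamma_lb hs1 k
  have hGden : 0 < Real.Gamma (lam * (k+1:ℕ) + lam + mu) := by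
    apply Real.Gamma_pos_of_pos
    have : (0:ℝ) ≤ lam * (k+1:ℕ) := by positivity
    linarith
  have hfac : (0:ℝ) < (Nat.factorial (k+2) : ℝ) := by exact_mod_cast Nat.factorial_pos _
  have hpoch : 0 < s * (s+1)^k := by positivity
  rw [wcoef]
  have hkey : s * (s+1)^k * Real.Gamma s ≤ Real.Gamma (lam * (k+1:ℕ) + lam + mu) :=
    le_trans hgl (le_trans hmono (le_of_eq rfl))
  rw [div_le_div_iff₀ (by positivity) (by positivity)]
  calc Real.Gamma s * (Nat.factorial (k+2) * (s * (s+1)^k))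
      = (Nat.factorial (k+2) : ℝ) * (s * (s+1)^k * Real.Gamma s) := by ring
    _ ≤ (Nat.factorial (k+2) : ℝ) * Real.Gamma (lam * (k+1:ℕ) + lam + mu) := by
        apply mul_le_mul_of_nonneg_left hkey hfac.le
    _ = 1 * ((Nat.factorial ((k+1)+1) : ℝ) * Real.Gamma (lam * (k+1:ℕ) + lam + mu)) := by
        norm_num


lemma fact_ge {k : ℕ} : (6:ℝ) * 4^k ≤ Nat.factorial (k+3) := by
  induction k with
  | zero => norm_num [Nat.factorial]
  | succ n ih =>
    have h4 : (4:ℝ) ≤ ((n+4:ℕ):ℝ) := by exact_mod_cast by omega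
    calc (6:ℝ) * 4^(n+1) = 4 * (6 * 4^n) := by ring
      _ ≤ ((n+4:ℕ):ℝ) * (Nat.factorial (n+3)) := by
          apply mul_le_mul h4 ih (by positivity) (by positivity)
      _ = (Nat.factorial (n+1+3) : ℝ) := by
          have h : Nat.factorial (n+4) = (n+4) * Nat.factorial (n+3) := Nat.factorial_succ (n+3)
          rw [show n+1+3 = n+4 from rfl, h]; push_cast; ring

/-- geometric bound for indices ≥ 2 -/
lemma wcoef_le_geom {lam mu : ℝ} (hlam : 1 ≤ lam) (hmu : 1 < lam + mu) (k : ℕ) :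
    wcoef lam mu (k+2) ≤ (1 / (6 * (lam+mu) * (lam+mu+1))) * (1/8)^k := by
  set s := lam + mu with hs
  have hs1 : 1 < s := hmu
  have h1 := wcoef_le hlam hmu (k+1)
  have h2 : (1:ℝ) / (Nat.factorial (k+3) * (s * (s+1)^(k+1)))
      ≤ (1 / (6 * s * (s+1))) * (1/8)^k := by
    rw [one_div_pow, div_mul_div_comm, one_mul]
    apply div_le_div_of_nonneg_left one_pos.le (by positivity)
    have h2k : (2:ℝ)^k ≤ (s+1)^k := pow_le_pow_left₀ (by norm_num) (by linarith) k
    calc 6 * s * (s+1) * 8^k = (6 * 4^k) * (s * ((s+1) * 2^k)) := by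
          rw [show (8:ℝ)^k = 2^k * 4^k by rw [← mul_pow]; norm_num]; ring
      _ ≤ (Nat.factorial (k+3) : ℝ) * (s * ((s+1) * (s+1)^k)) := by
          apply mul_le_mul fact_ge ?_ (by positivity) (by positivity)
          apply mul_le_mul_of_nonneg_left ?_ (by linarith)
          exact mul_le_mul_of_nonneg_left h2k (by linarith)
      _ = (Nat.factorial (k+3) : ℝ) * (s * (s+1)^(k+1)) := by ring
  calc wcoef lam mu (k+2) ≤ 1 / (Nat.factorial (k+3) * (s * (s+1)^(k+1))) := h1
    _ ≤ _ := h2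

lemma summable_wcoef {lam mu : ℝ} (hlam : 1 ≤ lam) (hmu : 1 < lam + mu) :
    Summable (wcoef lam mu) := by
  rw [← summable_nat_add_iff 2]
  apply Summable.of_nonneg_of_le (fun k => (wcoef_pos hlam hmu _).le)
    (fun k => wcoef_le_geom hlam hmu k)
  exact (summable_geometric_of_lt_one (by norm_num) (by norm_num)).mul_left _

/-- The key tail estimate: `(2s-1) * ∑_{m≥1} wcoef m ≤ 1`. -/
lemma key_tail {lam mu : ℝ} (hlam : 1 ≤ lam) (hmu : 1 < lam + mu) :
    (2*(lam+mu)-1) * (∑' k : ℕ, wcoef lam mu (k+1)) ≤ 1 := by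
  set s := lam + mu with hs
  have hs1 : 1 < s := hmu
  have hsum : Summable (fun k => wcoef lam mu (k+1)) :=
    (summable_nat_add_iff 1).2 (summable_wcoef hlam hmu)
  have hsum2 : Summable (fun k => wcoef lam mu (k+2)) :=
    (summable_nat_add_iff 2).2 (summable_wcoef hlam hmu)
  have hgeom : Summable (fun k : ℕ => (1 / (6 * s * (s+1))) * (1/8:ℝ)^k) :=
    (summable_geometric_of_lt_one (by norm_num) (by norm_num)).mul_left _
  have hsplit : (∑' k : ℕ, wcoef lam mu (k+1))
      = wcoef lam mu 1 + ∑' k : ℕ, wcoef lam mu (k+2) := by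
    rw [Summable.tsum_eq_zero_add hsum]
  have h1 : wcoef lam mu 1 ≤ 1 / (2*s) := by
    have := wcoef_le hlam hmu 0
    simpa [Nat.factorial] using this
  have h2 : (∑' k : ℕ, wcoef lam mu (k+2)) ≤ (1 / (6 * s * (s+1))) * (8/7) := by
    calc (∑' k : ℕ, wcoef lam mu (k+2))
        ≤ ∑' k : ℕ, (1 / (6 * s * (s+1))) * (1/8:ℝ)^k :=
          Summable.tsum_le_tsum (fun k => wcoef_le_geom hlam hmu k) hsum2 hgeom
      _ = (1 / (6 * s * (s+1))) * (1 - 1/8)⁻¹ := by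
          rw [tsum_mul_left, tsum_geometric_of_lt_one (by norm_num) (by norm_num)]
      _ = (1 / (6 * s * (s+1))) * (8/7) := by norm_num
  have hT : (∑' k : ℕ, wcoef lam mu (k+1)) ≤ 1/(2*s) + (1 / (6 * s * (s+1))) * (8/7) := by
    rw [hsplit]; exact add_le_add h1 h2
  have hspos : (0:ℝ) < s := by linarith
  have h2s1 : (0:ℝ) < 2*s - 1 := by linarith
  calc (2*s-1) * (∑' k : ℕ, wcoef lam mu (k+1))
      ≤ (2*s-1) * (1/(2*s) + (1 / (6 * s * (s+1))) * (8/7)) :=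
        mul_le_mul_of_nonneg_left hT h2s1.le
    _ ≤ 1 := by
        have heq : (2*s-1) * (1/(2*s) + 1/(6*s*(s+1))*(8/7)) =
            ((2*s-1)*(21*(s+1)+8)) / (42*(s*(s+1))) := by
          field_simp
          ring
        rw [heq, div_le_one (by positivity)]
        nlinarith [hs1]

lemma wcoef_le_one {lam mu : ℝ} (hlam : 1 ≤ lam) (hmu : 1 < lam + mu) (m : ℕ) :
    wcoef lam mu m ≤ 1 := by
  cases m with
  | zero => rw [wcoef_zero hmu]
  | succ k =>
    refine (wcoef_le hlam hmu k).trans ?_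
    rw [div_le_one (by positivity)]
    have h1 : (1:ℝ) ≤ (Nat.factorial (k+2) : ℝ) := by
      exact_mod_cast Nat.one_le_iff_ne_zero.2 (Nat.factorial_ne_zero _)
    have h2 : (1:ℝ) ≤ (lam+mu+1)^k := one_le_pow₀ (by linarith)
    have h3 : (1:ℝ) ≤ (lam+mu) * (lam+mu+1)^k := by nlinarith
    calc (1:ℝ) = 1 * 1 := by ring
      _ ≤ (Nat.factorial (k+2) : ℝ) * ((lam+mu) * (lam+mu+1)^k) :=
          mul_le_mul h1 h3 zero_le_one (by linarith)


end WrightAux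

set_option maxHeartbeats 1600000 in
/-- If `λ ≥ 1` and `λ + μ > 1`, then on the open unit disc `(𝕎_{λ,μ})_n` is nonzero away
from `0`, and `Re(𝕎_{λ,μ}(z)/(𝕎_{λ,μ})_n(z)) ≥ (2(λ+μ)-2)/(2(λ+μ)-1)`, the ratio being
understood as its analytic extension, with value `1`, at `z = 0`. -/
theorem re_normWright2_div_partial (lam mu : ℝ) (hlam : 1 ≤ lam) (hmu : 1 < lam + mu) (n : ℕ) :
    ∀ z : ℂ, ‖z‖ < 1 →
      (z ≠ 0 → normWright2Partial lam mu n z ≠ 0) ∧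
      (2 * (lam + mu) - 2) / (2 * (lam + mu) - 1) ≤
        (if z = 0 then (1 : ℂ)
          else normWright2 lam mu z / normWright2Partial lam mu n z).re := by
  intro z hz
  have hs1 : 1 < lam + mu := hmu
  set s := lam + mu with hs
  set γ : ℝ := (2 * s - 2) / (2 * s - 1) with hγ
  have h2s1 : (0:ℝ) < 2*s - 1 := by linarith
  have hγlt : γ < 1 := by rw [hγ, div_lt_one h2s1]; linarith
  by_cases hz0 : z = 0
  · subst hz0
    refine ⟨fun h => absurd rfl h, ?_⟩
    rw [if_pos rfl]
    simpa using hγlt.le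
  · set f : ℕ → ℂ := fun m => ((wcoef lam mu m : ℝ) : ℂ) * z^(m+1) with hf
    have hW : normWright2 lam mu z = ∑' m, f m := rfl
    have hP : normWright2Partial lam mu n z = ∑ m ∈ Finset.range (n+1), f m := rfl
    set W := normWright2 lam mu z with hWdef
    set P := normWright2Partial lam mu n z with hPdef
    have hzpos : 0 < ‖z‖ := norm_pos_iff.2 hz0
    -- norm of f
    have hnormf : ∀ m, ‖f m‖ = wcoef lam mu m * ‖z‖^(m+1) := by
      intro m
      rw [hf, norm_mul, norm_pow, Complex.norm_real,
        Real.norm_of_nonneg (wcoef_pos hlam hmu m).le]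
    have hfboundz : ∀ m, ‖f m‖ ≤ wcoef lam mu m * ‖z‖ := by
      intro m
      rw [hnormf m]
      exact mul_le_mul_of_nonneg_left
        (pow_le_of_le_one (norm_nonneg z) hz.le (Nat.succ_ne_zero m))
        (wcoef_pos hlam hmu m).le
    have hfs : Summable f := by
      apply Summable.of_norm_bounded (g := fun m => ‖z‖^(m+1)) ?_ ?_
      · have := (summable_geometric_of_lt_one (norm_nonneg z) hz).mul_right ‖z‖
        refine this.congr fun m => ?_
        rw [← pow_succ]
      · intro m
        rw [hnormf m]
        nlinarith [wcoef_le_one hlam hmu m, wcoef_pos hlam hmu m,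
          pow_nonneg (norm_nonneg z) (m+1), pow_le_one₀ (norm_nonneg z) hz.le (n := m+1)]
    -- real sums
    have hsumtail : Summable (fun i => wcoef lam mu (i+1)) :=
      (summable_nat_add_iff 1).2 (summable_wcoef hlam hmu)
    have hsumtail' : Summable (fun i => wcoef lam mu (i+(n+1))) :=
      (summable_nat_add_iff (n+1)).2 (summable_wcoef hlam hmu)
    set T := ∑' k : ℕ, wcoef lam mu (k+1) with hT
    have hkey : (2*s-1) * T ≤ 1 := key_tail hlam hmu
    set Sn := ∑ m ∈ Finset.range n, wcoef lam mu (m+1) with hSn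
    set τ := ∑' i : ℕ, wcoef lam mu (i+(n+1)) with hτ
    have hτnn : 0 ≤ τ := tsum_nonneg fun i => (wcoef_pos hlam hmu _).le
    have hSnn : 0 ≤ Sn := Finset.sum_nonneg fun i _ => (wcoef_pos hlam hmu _).le
    have hsplitT : Sn + τ = T := by
      have h := Summable.sum_add_tsum_nat_add (f := fun i => wcoef lam mu (i+1)) n hsumtail
      simpa [add_assoc] using h
    have hSnlt1 : Sn < 1 := by nlinarith
    -- tail of f
    have htail : W - P = ∑' i, f (i+(n+1)) := by
      have h := Summable.sum_add_tsum_nat_add (f := f) (n+1) hfs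
      rw [hW, hP, ← h]; ring
    -- numerator bound
    have hsn : Summable (fun i => ‖f (i+(n+1))‖) :=
      Summable.of_nonneg_of_le (fun i => norm_nonneg _)
        (fun i => hfboundz (i+(n+1))) (hsumtail'.mul_right ‖z‖)
    have hnum : ‖W - P‖ ≤ τ * ‖z‖ := by
      rw [htail]
      refine (norm_tsum_le_tsum_norm hsn).trans ?_
      rw [hτ, ← tsum_mul_right]
      exact Summable.tsum_le_tsum (fun i => hfboundz (i+(n+1))) hsn (hsumtail'.mul_right ‖z‖)
    -- partial sum lower bound
    have hf0 : f 0 = z := by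
      rw [hf]; simp [wcoef_zero hmu]
    have hSb : ‖∑ i ∈ Finset.range n, f (i+1)‖ ≤ Sn * ‖z‖ := by
      refine (norm_sum_le _ _).trans ?_
      rw [hSn, Finset.sum_mul]
      exact Finset.sum_le_sum fun i _ => hfboundz (i+1)
    have hPlb : (1 - Sn) * ‖z‖ ≤ ‖P‖ := by
      have hsplit : P = ∑ i ∈ Finset.range n, f (i+1) + f 0 := by
        rw [hP, Finset.sum_range_succ']
      have h1 : ‖f 0‖ ≤ ‖P‖ + ‖∑ i ∈ Finset.range n, f (i+1)‖ := by
        calc ‖f 0‖ = ‖P - ∑ i ∈ Finset.range n, f (i+1)‖ := by rw [hsplit]; congr 1; ring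
          _ ≤ ‖P‖ + ‖∑ i ∈ Finset.range n, f (i+1)‖ := norm_sub_le _ _
      rw [hf0] at h1
      nlinarith [hSb]
    have hPpos : 0 < ‖P‖ := lt_of_lt_of_le (by nlinarith) hPlb
    have hP0 : P ≠ 0 := fun h => by simp [h] at hPpos
    clear_value f W P T Sn τ s γ
    refine ⟨fun _ => hP0, ?_⟩
    rw [if_neg hz0]
    -- denominator
    set κ : ℝ := 1 - 2 * γ with hκ
    clear_value κ
    have h1κ : (0:ℝ) < 1 + κ := by rw [hκ]; linarith
    have hm : (2*s-1) * (1+κ) = 2 := by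
      rw [hκ, hγ]; field_simp; ring
    have hDlb : (1+κ)*((1 - Sn)*‖z‖) - τ*‖z‖ ≤ ‖W + (κ:ℂ)*P‖ := by
      have heqD : ((1+κ:ℝ):ℂ)*P = (W + (κ:ℂ)*P) - (W - P) := by push_cast; ring
      have h1 : ‖((1+κ:ℝ):ℂ)*P‖ ≤ ‖W + (κ:ℂ)*P‖ + ‖W - P‖ := by
        rw [heqD]; exact norm_sub_le _ _
      rw [norm_mul, Complex.norm_real, Real.norm_of_nonneg h1κ.le] at h1
      have h2 : (1+κ)*((1-Sn)*‖z‖) ≤ (1+κ)*‖P‖ :=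
        mul_le_mul_of_nonneg_left hPlb h1κ.le
      nlinarith [hnum]
    -- key comparison
    have hND : ‖W - P‖ ≤ ‖W + (κ:ℂ)*P‖ := by
      refine hnum.trans (le_trans ?_ hDlb)
      have hineq : (2*s-1)*τ + Sn ≤ 1 := by nlinarith
      have h5 : (1+κ)*((2*s-1)*τ + Sn) ≤ (1+κ)*1 := mul_le_mul_of_nonneg_left hineq h1κ.le
      have h6 : (2*s-1)*(1+κ)*τ = 2*τ := by rw [hm]
      have hstep : 2*τ ≤ (1+κ)*(1-Sn) := by nlinarith [h5, h6]
      nlinarith [mul_le_mul_of_nonneg_right hstep hzpos.le]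
    -- conclude about Re
    set u := W / P with hu
    have hWP : u * P = W := div_mul_cancel₀ W hP0
    have e1 : W - P = (u - 1) * P := by rw [sub_mul, one_mul, hWP]
    have e2 : W + (κ:ℂ)*P = (u + κ) * P := by rw [add_mul, hWP]
    rw [e1, e2, norm_mul, norm_mul] at hND
    have h3 : ‖u - 1‖ ≤ ‖u + κ‖ := le_of_mul_le_mul_right hND hPpos
    have h4 : Complex.normSq (u - 1) ≤ Complex.normSq (u + κ) := by
      rw [← Complex.sq_norm, ← Complex.sq_norm]
      exact pow_le_pow_left₀ (norm_nonneg _) h3 2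
    simp only [Complex.normSq_apply, Complex.sub_re, Complex.sub_im, Complex.add_re,
      Complex.add_im, Complex.one_re, Complex.one_im, Complex.ofReal_re,
      Complex.ofReal_im] at h4
    have hκγ : κ = 1 - 2*γ := hκ
    nlinarith [h4, hγlt, sq_nonneg (u.im)]
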